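/- Let I be a nonzero ideal of R. If the extended ideal I·S (the ideal of S generated by the image of I) is a principal ideal of S, then I^n is a principal ideal of R, where n = [L : K]. -/

import Mathlib

open Module

set_option maxHeartbeats 1000000 in
set_option synthInstance.maxHeartbeats 400000 in
/-- Let `R` be a Dedekind domain with fraction field `K`, `L/K` a finite
separable extension of degree `n`, and `S = integralClosure R L` (a Dedekind domain).  If the
extension `I·S` of a nonzero ideal `I` of `R` is principal, then `I ^ n` is principal, where
`n = [L : K]`. -/
theorem pow_isPrincipal_of_map_isPrincipal
    (R : Type*) [CommRing R] [IsDomain R] [IsDedekindDomain R]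
    (K L : Type*) [Field K] [Field L] [Algebra R K] [IsFractionRing R K]
    [Algebra K L] [Algebra R L] [IsScalarTower R K L]
    [FiniteDimensional K L] [Algebra.IsSeparable K L]
    (I : Ideal R) (hI : I ≠ ⊥)
    (h : (Ideal.map (algebraMap R (integralClosure R L)) I).IsPrincipal) :
    (I ^ (Module.finrank K L)).IsPrincipal := by
  classical
  set S : Subalgebra R L := integralClosure R L with hS
  obtain ⟨α, hα'⟩ := h
  have hα : Ideal.map (algebraMap R S) I = Ideal.span {α} := hα'
  set E := AlgebraicClosure L with hE
  set T : Subalgebra R E := integralClosure R E with hT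
  set n := Module.finrank K L with hn
  -- injectivity of algebra maps
  have hRL : Function.Injective (algebraMap R L) := by
    rw [IsScalarTower.algebraMap_eq R K L]
    exact (algebraMap K L).injective.comp (IsFractionRing.injective R K)
  have hRE : Function.Injective (algebraMap R E) := by
    rw [IsScalarTower.algebraMap_eq R L E]
    exact (algebraMap L E).injective.comp hRL
  -- α ≠ 0
  have hα0 : α ≠ 0 := by
    rintro rfl
    obtain ⟨x, hxI, hx0⟩ := Submodule.exists_mem_ne_zero_of_ne_bot hI
    have hmem : algebraMap R S x ∈ Ideal.map (algebraMap R S) I := Ideal.mem_map_of_mem _ hxI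
    rw [hα] at hmem
    simp only [Set.singleton_zero, Ideal.span_zero, Ideal.mem_bot] at hmem
    apply hx0
    apply hRL
    have hLx : algebraMap R L x = 0 := by
      rw [IsScalarTower.algebraMap_apply R S L, hmem]
      simp
    simp [hLx]
  have hSint : ∀ s : S, IsIntegral R (s : L) := fun s => s.2
  -- the embeddings
  let g : (L →ₐ[K] E) → (S →ₐ[R] T) := fun σ =>
    ((σ.restrictScalars R).comp (IsScalarTower.toAlgHom R S L)).codRestrict T
      (fun s => IsIntegral.map ((σ.restrictScalars R).comp (IsScalarTower.toAlgHom R S L))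
        (integralClosure.isIntegral s))
  have hmapσ : ∀ σ : L →ₐ[K] E, Ideal.map (algebraMap R T) I = Ideal.span {g σ α} := by
    intro σ
    rw [← (g σ).comp_algebraMap, ← Ideal.map_map, hα, Ideal.map_span]
    simp
  -- the norm as an element of R
  have hint : IsIntegral R (Algebra.norm K (algebraMap S L α)) :=
    Algebra.isIntegral_norm (L := L) K (hSint α)
  obtain ⟨r, hr⟩ := IsIntegrallyClosed.isIntegral_iff.mp hint
  have hNα : algebraMap K E (Algebra.norm K (algebraMap S L α)) =
      ∏ σ : L →ₐ[K] E, σ (algebraMap S L α) :=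
    Algebra.norm_eq_prod_embeddings K E _
  -- r ≠ 0
  have hr0 : r ≠ 0 := by
    rintro rfl
    rw [map_zero] at hr
    have hαL : algebraMap S L α ≠ 0 := by
      intro hh
      exact hα0 (Subtype.ext (by simpa using hh))
    exact Algebra.norm_ne_zero_iff.mpr hαL hr.symm
  -- key computation : map of I^n equals span of algebraMap r
  have key : Ideal.map (algebraMap R T) (I ^ n) = Ideal.span {algebraMap R T r} := by
    have hβ : (∏ σ : L →ₐ[K] E, g σ α) = algebraMap R T r := by
      apply Subtype.ext
      have h1 : ((∏ σ : L →ₐ[K] E, g σ α : T) : E) = ∏ σ : L →ₐ[K] E, ((g σ α : T) : E) :=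
        SubmonoidClass.coe_finset_prod _ _
      have h2 : ∀ σ : L →ₐ[K] E, ((g σ α : T) : E) = σ (algebraMap S L α) := fun σ => rfl
      have h3 : ((algebraMap R T r : T) : E) = algebraMap R E r := rfl
      rw [h1, h3]
      simp only [h2]
      rw [← hNα, ← hr, ← IsScalarTower.algebraMap_apply R K E]
    rw [Ideal.map_pow]
    have hcard : n = Fintype.card (L →ₐ[K] E) := (AlgHom.card K L E).symm
    rw [hcard]
    calc Ideal.map (algebraMap R T) I ^ Fintype.card (L →ₐ[K] E)
        = ∏ _σ : L →ₐ[K] E, Ideal.map (algebraMap R T) I := by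
          rw [Finset.prod_const, Finset.card_univ]
      _ = ∏ σ : L →ₐ[K] E, Ideal.span {(g σ α : T)} := Finset.prod_congr rfl fun σ _ => hmapσ σ
      _ = Ideal.span {∏ σ : L →ₐ[K] E, (g σ α : T)} := Ideal.prod_span_singleton _ _
      _ = Ideal.span {algebraMap R T r} := by rw [hβ]
  -- descent : I ^ n ≤ span {r}
  have hle : I ^ n ≤ Ideal.span {r} := by
    intro x hx
    have hxT : algebraMap R T x ∈ Ideal.span {algebraMap R T r} := by
      rw [← key]; exact Ideal.mem_map_of_mem _ hx
    obtain ⟨t, ht⟩ := Ideal.mem_span_singleton'.mp hxT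
    -- t * r = x in T; pass to E and then to K
    have htE : (t : E) * algebraMap R E r = algebraMap R E x := by
      have h4 := congrArg (fun z : T => (z : E)) ht
      rw [IsScalarTower.algebraMap_apply R T E, IsScalarTower.algebraMap_apply R T E]
      exact h4
    have hrE : algebraMap R E r ≠ 0 := fun hh => hr0 (hRE (by simpa using hh))
    have htK : (t : E) = algebraMap K E (algebraMap R K x / algebraMap R K r) := by
      rw [map_div₀, ← IsScalarTower.algebraMap_apply R K E, ← IsScalarTower.algebraMap_apply R K E]
      rw [eq_div_iff hrE]
      linear_combination htE
    have htint : IsIntegral R ((algebraMap R K x / algebraMap R K r : K)) := by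
      have h5 : IsIntegral R (t : E) := t.2
      rw [htK] at h5
      exact (isIntegral_algebraMap_iff (algebraMap K E).injective).mp h5
    obtain ⟨y, hy⟩ := IsIntegrallyClosed.isIntegral_iff.mp htint
    rw [Ideal.mem_span_singleton]
    refine ⟨y, ?_⟩
    apply IsFractionRing.injective R K
    rw [map_mul, hy]
    have hrK : algebraMap R K r ≠ 0 :=
      fun hh => hr0 (IsFractionRing.injective R K (by simpa using hh))
    field_simp
  -- deduce equality using Dedekind divisibility and lying over
  obtain ⟨C, hC⟩ := Ideal.dvd_iff_le.mpr hle
  have hρ0 : algebraMap R T r ≠ 0 := by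
    intro hh
    apply hr0
    apply hRE
    rw [IsScalarTower.algebraMap_apply R T E, hh]
    simp
  have hCtop : Ideal.map (algebraMap R T) C = ⊤ := by
    have hmapC : Ideal.span {algebraMap R T r} * Ideal.map (algebraMap R T) C
        = Ideal.span {algebraMap R T r} * ⊤ := by
      rw [Ideal.mul_top]
      have h6 := key
      rw [hC, Ideal.map_mul, Ideal.map_span, Set.image_singleton] at h6
      exact h6
    exact Ideal.span_singleton_mul_right_inj hρ0 |>.mp hmapC
  have hCeq : C = ⊤ := by
    by_contra hCne
    obtain ⟨M, hM, hCM⟩ := Ideal.exists_le_maximal C hCne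
    have hker : RingHom.ker (algebraMap R T) ≤ M := by
      have hk : RingHom.ker (algebraMap R T) = ⊥ := by
        rw [RingHom.ker_eq_bot_iff_eq_zero]
        intro a ha
        apply hRE
        rw [IsScalarTower.algebraMap_apply R T E, ha]
        simp
      rw [hk]; exact bot_le
    obtain ⟨Q, hQmax, hQ⟩ := Ideal.exists_ideal_over_maximal_of_isIntegral (S := T) M hker
    have hle2 : Ideal.map (algebraMap R T) C ≤ Q := by
      rw [← hQ] at hCM
      exact Ideal.map_le_of_le_comap hCM
    rw [hCtop] at hle2
    exact hQmax.ne_top (top_le_iff.mp hle2)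
  rw [hC, hCeq, Ideal.mul_top]
  exact ⟨r, rfl⟩
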